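/- Let I ⊂ R = K[x_0,…,x_n] be a homogeneous ideal with grade(I) ≥ 2 (i.e. I contains an R-regular sequence of length 2), set A = R/I, and suppose a minimal graded free presentation of I has the form ⊕_j R(−n_{2j}) → ⊕_i R(−n_{1i}) → I → 0 with max_j{n_{2j}} < 2·min_i{n_{1i}}. Then the natural map R → Hom_R(I, I) is an isomorphism, and the K-vector space of degree-preserving A-linear endomorphisms of the conormal module I/I² is one-dimensional: ₀Hom_A(I/I², I/I²) ≅ K, i.e. every A-linear map I/I² → I/I² carrying each graded piece into itself is multiplication by a scalar of K. -/

import Mathlib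

/-!
Common setup: standard determinantal rings.  `𝒜` is a `t × (t+c-1)` homogeneous polynomial
matrix over `R = K[x_0, …, x_n]`, representing a graded morphism
`φ : F = ⊕ R(-a_j) → G = ⊕ R(-b_i)`; `I = I_t(𝒜)`, `A = R/I`, `J = I_{t-1}(𝒜)`,
`M = coker φ`, and `S_iM` denotes symmetric powers of `M` (with `S_0M = A` and
`S_{-1}M = Hom_A(M, A) = Hom_R(M, A)`).
-/

open scoped TensorProduct
open CategoryTheory

/-- The polynomial ring `K[x_0, …, x_n]`. -/
abbrev PolyR (K : Type) [CommRing K] (n : ℕ) : Type := MvPolynomial (Fin (n + 1)) K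

/-- The irrelevant maximal ideal `m = (x_0, …, x_n)`. -/
noncomputable def mxIdeal (K : Type) [CommRing K] (n : ℕ) : Ideal (PolyR K n) :=
  Ideal.span (Set.range MvPolynomial.X)

/-- The ideal generated by the `k × k` minors of a matrix. -/
noncomputable def minorsIdeal {R : Type} [CommRing R] {m n : ℕ} (k : ℕ)
    (A : Matrix (Fin m) (Fin n) R) : Ideal R :=
  Ideal.span {d : R | ∃ (r : Fin k → Fin m) (c : Fin k → Fin n), d = (A.submatrix r c).det}

/-- `p` is homogeneous of (integer) degree `d`; for `d < 0` this forces `p = 0`. -/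
def IsHomOfDeg {σ K : Type} [CommSemiring K] (p : MvPolynomial σ K) (d : ℤ) : Prop :=
  ∀ u : σ →₀ ℕ, MvPolynomial.coeff u p ≠ 0 → ((u.sum fun _ e => e : ℕ) : ℤ) = d

/-- `depth_J M`: the supremum of lengths of `M`-regular sequences of elements of `J`. -/
noncomputable def depth {R : Type} [CommRing R] (J : Ideal R) (M : Type) [AddCommGroup M]
    [Module R M] : ℕ∞ :=
  sSup {d : ℕ∞ | ∃ rs : List R, (rs.length : ℕ∞) = d ∧ (∀ r ∈ rs, r ∈ J) ∧
    RingTheory.Sequence.IsRegular M rs}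

/-- The `i`-th symmetric power of a module: the coinvariants of the permutation action
on the `i`-th tensor power. -/
abbrev SymPow (R : Type) [CommRing R] (M : Type) [AddCommGroup M] [Module R M] (i : ℕ) : Type :=
  (⨂[R]^i M) ⧸ (Submodule.span R {x : ⨂[R]^i M | ∃ (σ : Equiv.Perm (Fin i)) (y : ⨂[R]^i M),
      x = y - (PiTensorProduct.reindex R (fun _ => M) σ) y})

/-- The cokernel `M` of the map `φ : F → G` given by the matrix `𝒜`. -/
abbrev CokM {K : Type} [CommRing K] {n t s : ℕ} (𝒜 : Matrix (Fin t) (Fin s) (PolyR K n)) :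
    Type :=
  (Fin t → PolyR K n) ⧸ LinearMap.range (Matrix.mulVecLin 𝒜)

/-- `S_iM` for `i : ℤ`, where `S_0M := A = R/I_t(𝒜)` and `S_iM := Hom_A(M, A)` for `i < 0`. -/
noncomputable def SM {K : Type} [CommRing K] {n t s : ℕ}
    (𝒜 : Matrix (Fin t) (Fin s) (PolyR K n)) (i : ℤ) : ModuleCat (PolyR K n) :=
  if i < 0 then ModuleCat.of _ (CokM 𝒜 →ₗ[PolyR K n] (PolyR K n ⧸ minorsIdeal t 𝒜))
  else if i = 0 then ModuleCat.of _ (PolyR K n ⧸ minorsIdeal t 𝒜)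
  else ModuleCat.of _ (SymPow (PolyR K n) (CokM 𝒜) i.toNat)

/-- `Ext_R^i(M, N)`, as an `R`-module. -/
noncomputable def ExtMod (R : Type) [CommRing R] (M N : ModuleCat R) (i : ℕ) : ModuleCat R :=
  ((Ext R (ModuleCat R) i).obj (Opposite.op M)).obj N

/-- `pd_R N ≤ k`, expressed through the vanishing of `Ext_R^j(N, -)` for all `j > k`. -/
def projDimLE (R : Type) [CommRing R] (N : ModuleCat R) (k : ℕ) : Prop :=
  ∀ (L : ModuleCat R) (j : ℕ), k < j → Subsingleton (ExtMod R N L j)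


attribute [local instance] MvPolynomial.gradedAlgebra

section StmtAuxSection

open Pointwise

attribute [local instance] MvPolynomial.gradedAlgebra

namespace StmtAux
open MvPolynomial

lemma mem_smul_top_iff {R : Type} [CommRing R] (r x : R) :
    x ∈ r • (⊤ : Submodule R R) ↔ ∃ u : R, r * u = x := by
  rw [← SetLike.mem_coe, Submodule.coe_pointwise_smul, Submodule.top_coe]
  simp [Set.mem_smul_set, smul_eq_mul, eq_comm]

variable {σ KK : Type} [CommRing KK] [DecidableEq σ]

omit [DecidableEq σ] in
lemma degree_sum_eq (u : σ →₀ ℕ) : (u.sum fun _ e => e) = u.degree := rfl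

omit [DecidableEq σ] in
lemma degree_add (u v : σ →₀ ℕ) : (u + v).degree = u.degree + v.degree := by
  simp [Finsupp.degree_eq_weight_one]

lemma isHomOfDeg_mul {a b : MvPolynomial σ KK} {d e : ℤ} (ha : IsHomOfDeg a d)
    (hb : IsHomOfDeg b e) : IsHomOfDeg (a * b) (d + e) := by
  intro μ hμ
  rw [coeff_mul] at hμ
  obtain ⟨⟨ν, ρ⟩, hmem, hne⟩ := Finset.exists_ne_zero_of_sum_ne_zero hμ
  have h1 := ha ν (left_ne_zero_of_mul hne)
  have h2 := hb ρ (right_ne_zero_of_mul hne)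
  have h3 : ν + ρ = μ := Finset.HasAntidiagonal.mem_antidiagonal.mp hmem
  subst h3
  rw [degree_sum_eq] at h1 h2 ⊢
  rw [degree_add, Nat.cast_add, h1, h2]

omit [DecidableEq σ] in
lemma isHomOfDeg_sum {ι : Type} (s : Finset ι) (F : ι → MvPolynomial σ KK) {d : ℤ}
    (h : ∀ i ∈ s, IsHomOfDeg (F i) d) : IsHomOfDeg (∑ i ∈ s, F i) d := by
  intro μ hμ
  rw [coeff_sum] at hμ
  obtain ⟨i, hi, hne⟩ := Finset.exists_ne_zero_of_sum_ne_zero hμ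
  exact h i hi μ hne

omit [DecidableEq σ] in
lemma isHomogeneous_of_isHomOfDeg {p : MvPolynomial σ KK} {m : ℕ} (h : IsHomOfDeg p (m : ℤ)) :
    p.IsHomogeneous m := by
  intro d hd
  have h1 := h d hd
  rw [degree_sum_eq] at h1
  rw [show Finsupp.weight (1 : σ → ℕ) = Finsupp.weight (fun _ => 1) from rfl,
    ← Finsupp.degree_eq_weight_one]
  exact_mod_cast h1

lemma homogeneousComponent_mul_homog (a h : MvPolynomial σ KK) {e : ℕ}
    (hh : h.IsHomogeneous e) :
    homogeneousComponent e (a * h) = C (coeff 0 a) * h := by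
  ext μ
  rw [coeff_homogeneousComponent, coeff_C_mul]
  by_cases hμ : μ.degree = e
  · rw [if_pos hμ, coeff_mul]
    have hside : ∀ b ∈ Finset.HasAntidiagonal.antidiagonal μ, b ≠ ((0 : σ →₀ ℕ), μ) →
        coeff b.1 a * coeff b.2 h = 0 := by
      rintro ⟨ν, ρ⟩ hmem hne
      have h3 : ν + ρ = μ := Finset.HasAntidiagonal.mem_antidiagonal.mp hmem
      by_cases hρ : coeff ρ h = 0
      · rw [hρ, mul_zero]
      · exfalso
        have h4 : ρ.degree = e := by
          have := hh hρ
          rw [show Finsupp.weight (1 : σ → ℕ) = Finsupp.weight (fun _ => 1) from rfl,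
            ← Finsupp.degree_eq_weight_one] at this
          exact this
        have h5 : ν.degree = 0 := by
          have := degree_add ν ρ
          rw [h3, hμ, h4] at this
          omega
        have h6 : ν = 0 := (Finsupp.degree_eq_zero_iff ν).mp h5
        subst h6
        rw [zero_add] at h3
        exact hne (by rw [h3])
    rw [Finset.sum_eq_single_of_mem ((0 : σ →₀ ℕ), μ)
        (Finset.HasAntidiagonal.mem_antidiagonal.mpr (zero_add μ)) hside]
  · rw [if_neg hμ]
    rw [IsHomogeneous.coeff_eq_zero hh hμ, mul_zero]

/-- the ideal of polynomials with no nonzero coefficients below degree `e` -/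
def lowVanish (σ KK : Type) [CommRing KK] [DecidableEq σ] (e : ℕ) :
    Ideal (MvPolynomial σ KK) where
  carrier := {x | ∀ μ : σ →₀ ℕ, μ.degree < e → coeff μ x = 0}
  add_mem' := fun hx hy μ hμ => by
    rw [coeff_add, hx μ hμ, hy μ hμ, add_zero]
  zero_mem' := fun μ _ => by simp
  smul_mem' := fun r x hx μ hμ => by
    rw [smul_eq_mul, coeff_mul]
    apply Finset.sum_eq_zero
    rintro ⟨ν, ρ⟩ hmem
    have h3 : ν + ρ = μ := Finset.HasAntidiagonal.mem_antidiagonal.mp hmem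
    have h4 : ρ.degree < e := by
      have := degree_add ν ρ
      rw [h3] at this
      omega
    rw [hx ρ h4, mul_zero]

end StmtAux

end StmtAuxSection

/-- from Theorem 4.3. Let `I ⊂ R = K[x_0, …, x_n]` be a homogeneous
ideal with `grade(I) ≥ 2`, with a minimal graded free presentation
`⊕_j R(-n_{2j}) → ⊕_i R(-n_{1i}) → I → 0` satisfying `max{n_{2j}} < 2·min{n_{1i}}`.
Then the natural map `R → Hom_R(I, I)` is an isomorphism, and every `A`-linear,
degree-preserving endomorphism of the conormal module `I/I²` is multiplication by a
scalar of `K` (`₀Hom_A(I/I², I/I²) ≅ K`). -/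
theorem statement_19
    (K : Type) [Field K] [IsAlgClosed K] [CharZero K] (n : ℕ)
    (I : Ideal (PolyR K n))
    (hIhom : ∃ S : Set (PolyR K n),
      (∀ p ∈ S, ∃ d : ℕ, IsHomOfDeg p d) ∧ I = Ideal.span S)
    (hgrade : ∃ rs : List (PolyR K n), rs.length = 2 ∧ (∀ r ∈ rs, r ∈ I) ∧
      RingTheory.Sequence.IsRegular (PolyR K n) rs)
    (p q : ℕ) (n1 : Fin p → ℕ) (n2 : Fin q → ℕ)
    (g : Fin p → PolyR K n) (hg : ∀ i, IsHomOfDeg (g i) (n1 i))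
    (hspan : I = Ideal.span (Set.range g))
    (B : Matrix (Fin p) (Fin q) (PolyR K n))
    (hB : ∀ i j, IsHomOfDeg (B i j) ((n2 j : ℤ) - n1 i))
    (hmin : ∀ i j, MvPolynomial.coeff 0 (B i j) = 0)
    (hexact : ∀ v : Fin p → PolyR K n,
      (∑ i, v i * g i) = 0 ↔ v ∈ LinearMap.range (Matrix.mulVecLin B))
    (hdeg : ∀ j i, n2 j < 2 * n1 i) :
    Function.Bijective (LinearMap.lsmul (PolyR K n) ↥I) ∧
    ∀ f : I.Cotangent →ₗ[PolyR K n] I.Cotangent,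
      (∀ (d : ℕ) (x : ↥I), IsHomOfDeg (x : PolyR K n) d →
        ∃ y : ↥I, IsHomOfDeg (y : PolyR K n) d ∧ f (I.toCotangent x) = I.toCotangent y) →
      ∃ k : K, ∀ ξ : I.Cotangent, f ξ = (algebraMap K (PolyR K n) k) • ξ := by
  classical
  obtain ⟨rs, hlen, hmemI, hreg⟩ := hgrade
  obtain ⟨r₁, r₂, rfl⟩ : ∃ a b, rs = [a, b] := by
    rcases rs with _ | ⟨a, _ | ⟨b, _ | _⟩⟩ <;> simp at hlen
    exact ⟨_, _, rfl⟩
  have hr₁I : r₁ ∈ I := hmemI _ (by simp)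
  have hr₂I : r₂ ∈ I := hmemI _ (by simp)
  -- extract regularity data
  have hw := hreg.toIsWeaklyRegular
  rw [RingTheory.Sequence.isWeaklyRegular_cons_iff] at hw
  obtain ⟨hreg1, hw⟩ := hw
  rw [RingTheory.Sequence.isWeaklyRegular_cons_iff] at hw
  obtain ⟨hreg2, -⟩ := hw
  have hr₁ne : r₁ ≠ 0 := by
    rintro rfl
    have := @hreg1 1 0 (by simp)
    simp at this
  have hdvd : ∀ t s : PolyR K n, r₁ * s = r₂ * t → ∃ u, r₁ * u = t := by
    intro t s hts
    have h0 : r₂ • (Submodule.Quotient.mk t : QuotSMulTop r₁ (PolyR K n)) = r₂ • 0 := by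
      rw [smul_zero, ← Submodule.Quotient.mk_smul, Submodule.Quotient.mk_eq_zero]
      exact (StmtAux.mem_smul_top_iff _ _).mpr ⟨s, by simpa using hts⟩
    have h3 := hreg2 h0
    rw [Submodule.Quotient.mk_eq_zero] at h3
    exact (StmtAux.mem_smul_top_iff _ _).mp h3
  -- symmetry of endomorphisms of I
  have hsym : ∀ (φ : ↥I →ₗ[PolyR K n] ↥I) (x z : ↥I),
      (x : PolyR K n) * (φ z : PolyR K n) = (z : PolyR K n) * (φ x : PolyR K n) := by
    intro φ x z
    have h1 : (x : PolyR K n) • z = (z : PolyR K n) • x :=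
      Subtype.ext (by simp [smul_eq_mul, mul_comm])
    have h2 : (x : PolyR K n) • φ z = (z : PolyR K n) • φ x := by
      rw [← map_smul, h1, map_smul]
    have h3 := Subtype.ext_iff.mp h2
    simpa [smul_eq_mul] using h3
  have hbij : Function.Bijective (LinearMap.lsmul (PolyR K n) ↥I) := by
    constructor
    · intro c₁ c₂ hcc
      have h3 := LinearMap.ext_iff.mp hcc ⟨r₁, hr₁I⟩
      have h4 := Subtype.ext_iff.mp h3
      simp only [LinearMap.lsmul_apply, SetLike.val_smul, smul_eq_mul] at h4
      exact mul_right_cancel₀ hr₁ne h4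
    · intro φ
      obtain ⟨c, hc⟩ := hdvd (φ ⟨r₁, hr₁I⟩ : PolyR K n) (φ ⟨r₂, hr₂I⟩ : PolyR K n)
        (hsym φ ⟨r₁, hr₁I⟩ ⟨r₂, hr₂I⟩)
      refine ⟨c, LinearMap.ext fun x => Subtype.ext ?_⟩
      simp only [LinearMap.lsmul_apply, SetLike.val_smul, smul_eq_mul]
      apply mul_left_cancel₀ hr₁ne
      calc r₁ * (c * (x : PolyR K n)) = (x : PolyR K n) * (r₁ * c) := by ring
        _ = (x : PolyR K n) * ((φ ⟨r₁, hr₁I⟩ : ↥I) : PolyR K n) := by rw [hc]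
        _ = r₁ * ((φ x : ↥I) : PolyR K n) := hsym φ x ⟨r₁, hr₁I⟩
  refine ⟨hbij, ?_⟩
  intro f hf
  have hgI : ∀ i, g i ∈ I := fun i => by
    rw [hspan]; exact Ideal.subset_span ⟨i, rfl⟩
  have hy := fun i => hf (n1 i) ⟨g i, hgI i⟩ (hg i)
  choose Y hYdeg hYf using hy
  -- p is nonzero
  have hpne : Nonempty (Fin p) := by
    rcases isEmpty_or_nonempty (Fin p) with he | h
    · exfalso
      have h0 : I = ⊥ := by
        rw [hspan, Set.range_eq_empty g, Ideal.span_empty]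
      exact hr₁ne (by simpa [h0] using hr₁I)
    · exact h
  set m₀ := Finset.univ.inf' (Finset.univ_nonempty (α := Fin p)) n1 with hm₀
  have hm₀le : ∀ i, m₀ ≤ n1 i := fun i => Finset.inf'_le _ (Finset.mem_univ i)
  have hn2lt : ∀ j, n2 j < m₀ + m₀ := by
    intro j
    obtain ⟨i, -, hi⟩ := Finset.exists_mem_eq_inf' (Finset.univ_nonempty (α := Fin p)) n1
    have h0 : m₀ = n1 i := hi
    have := hdeg j i
    omega
  -- low-degree vanishing
  have hIlow : I ≤ StmtAux.lowVanish (Fin (n + 1)) K m₀ := by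
    rw [hspan, Ideal.span_le]
    rintro _ ⟨i, rfl⟩
    intro μ hμ
    by_contra hne
    have h6 := hg i μ hne
    rw [StmtAux.degree_sum_eq] at h6
    have h7 : μ.degree = n1 i := by exact_mod_cast h6
    have := hm₀le i
    omega
  have hI2low : I ^ 2 ≤ StmtAux.lowVanish (Fin (n + 1)) K (m₀ + m₀) := by
    rw [pow_two]
    refine Ideal.mul_le.mpr fun r hr s hs => ?_
    intro μ hμ
    rw [MvPolynomial.coeff_mul]
    apply Finset.sum_eq_zero
    rintro ⟨ν, ρ⟩ hmem
    have h3 : ν + ρ = μ := Finset.HasAntidiagonal.mem_antidiagonal.mp hmem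
    have h4 : ν.degree + ρ.degree = μ.degree := by rw [← h3, StmtAux.degree_add]
    by_cases hν : ν.degree < m₀
    · rw [hIlow hr ν hν, zero_mul]
    · have h5 : ρ.degree < m₀ := by omega
      rw [hIlow hs ρ h5, mul_zero]
  -- homogeneity of I and I^2
  have hIhomog : I.IsHomogeneous (MvPolynomial.homogeneousSubmodule (Fin (n + 1)) K) := by
    rw [hspan]
    refine Ideal.homogeneous_span _ _ ?_
    rintro _ ⟨i, rfl⟩
    exact ⟨(n1 i : ℕ), (MvPolynomial.mem_homogeneousSubmodule _ _).mpr
      (StmtAux.isHomogeneous_of_isHomOfDeg (hg i))⟩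
  have hcomp2 : ∀ w ∈ I ^ 2, ∀ d, MvPolynomial.homogeneousComponent d w ∈ I ^ 2 := by
    intro w hw d
    have h2 : (I ^ 2).IsHomogeneous (MvPolynomial.homogeneousSubmodule (Fin (n + 1)) K) := by
      rw [pow_two]; exact hIhomog.mul hIhomog
    have h3 := h2 d hw
    rwa [show ((DirectSum.decompose (MvPolynomial.homogeneousSubmodule (Fin (n + 1)) K) w d :
        PolyR K n)) = MvPolynomial.homogeneousComponent d w from
      MvPolynomial.decomposition.decompose'_apply w d] at h3
  -- generators as elements of I
  set X : Fin p → ↥I := fun i => (⟨g i, hgI i⟩ : ↥I) with hX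
  have hXcoe : ∀ v : Fin p → PolyR K n,
      ((∑ i, v i • X i : ↥I) : PolyR K n) = ∑ i, v i * g i := by
    intro v
    rw [AddSubmonoidClass.coe_finset_sum]
    exact Finset.sum_congr rfl fun i _ => by simp [hX, smul_eq_mul]
  have hYcoe : ∀ v : Fin p → PolyR K n,
      ((∑ i, v i • Y i : ↥I) : PolyR K n) = ∑ i, v i * ((Y i : ↥I) : PolyR K n) := by
    intro v
    rw [AddSubmonoidClass.coe_finset_sum]
    exact Finset.sum_congr rfl fun i _ => by simp [smul_eq_mul]
  have hfS : ∀ v : Fin p → PolyR K n,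
      f (I.toCotangent (∑ i, v i • X i)) = I.toCotangent (∑ i, v i • Y i) := by
    intro v
    simp only [map_sum, map_smul]
    exact Finset.sum_congr rfl fun i _ => by rw [hYf i]
  -- the columns of B are syzygies, and their images vanish
  have hcol0 : ∀ j, (∑ i, B i j * g i) = 0 := by
    intro j
    refine (hexact fun i => B i j).mpr ⟨Pi.single j 1, ?_⟩
    ext i
    simp [Matrix.mulVecLin_apply, Matrix.mulVec_single]
  have hz : ∀ j, (∑ i, B i j * ((Y i : ↥I) : PolyR K n)) = 0 := by
    intro j
    have h0 : (∑ i, (B i j) • X i) = (0 : ↥I) := by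
      apply Subtype.ext
      rw [hXcoe]
      simpa using hcol0 j
    have h1 : I.toCotangent (∑ i, (B i j) • Y i) = 0 := by
      rw [← hfS, h0, map_zero, map_zero]
    have h2 := (Ideal.toCotangent_eq_zero _ _).mp h1
    rw [hYcoe] at h2
    have h3 : IsHomOfDeg (∑ i, B i j * ((Y i : ↥I) : PolyR K n)) (n2 j) := by
      apply StmtAux.isHomOfDeg_sum
      intro i _
      have h4 := StmtAux.isHomOfDeg_mul (hB i j) (hYdeg i)
      have h5 : ((n2 j : ℤ) - (n1 i : ℤ)) + (n1 i : ℤ) = (n2 j : ℤ) := by ring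
      rwa [h5] at h4
    ext μ
    rw [MvPolynomial.coeff_zero]
    by_contra hne
    have h6 := h3 μ hne
    rw [StmtAux.degree_sum_eq] at h6
    have h7 : μ.degree = n2 j := by exact_mod_cast h6
    have h8 := hI2low h2 μ (by rw [h7]; exact hn2lt j)
    exact hne h8
  -- all syzygies map to zero
  have hsyz : ∀ v : Fin p → PolyR K n, (∑ i, v i * g i) = 0 →
      (∑ i, v i * ((Y i : ↥I) : PolyR K n)) = 0 := by
    intro v hv
    obtain ⟨w, hw⟩ := (hexact v).mp hv
    have hvi : ∀ i, v i = ∑ j, B i j * w j := by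
      intro i
      rw [← hw]
      simp [Matrix.mulVecLin_apply, Matrix.mulVec, dotProduct]
    calc (∑ i, v i * ((Y i : ↥I) : PolyR K n))
        = ∑ i, ∑ j, (B i j * w j) * ((Y i : ↥I) : PolyR K n) := by
          refine Finset.sum_congr rfl fun i _ => ?_
          rw [hvi i, Finset.sum_mul]
      _ = ∑ j, ∑ i, (B i j * w j) * ((Y i : ↥I) : PolyR K n) := Finset.sum_comm
      _ = ∑ j, w j * ∑ i, B i j * ((Y i : ↥I) : PolyR K n) := by
          refine Finset.sum_congr rfl fun j _ => ?_
          rw [Finset.mul_sum]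
          exact Finset.sum_congr rfl fun i _ => by ring
      _ = 0 := by simp [hz]
  -- representation of elements of I
  have hrep0 : ∀ x : ↥I, ∃ v : Fin p → PolyR K n, (∑ i, v i * g i) = (x : PolyR K n) := by
    intro x
    have hx : (x : PolyR K n) ∈ Submodule.span (PolyR K n) (Set.range g) := by
      rw [Ideal.submodule_span_eq, ← hspan]
      exact x.2
    obtain ⟨v, hv⟩ := (Submodule.mem_span_range_iff_exists_fun _).mp hx
    exact ⟨v, by simpa [smul_eq_mul] using hv⟩
  choose rep hrep using hrep0
  have hwd : ∀ v v' : Fin p → PolyR K n, (∑ i, v i * g i) = (∑ i, v' i * g i) →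
      (∑ i, v i * ((Y i : ↥I) : PolyR K n)) = (∑ i, v' i * ((Y i : ↥I) : PolyR K n)) := by
    intro v v' hvv
    have h0 := hsyz (fun i => v i - v' i) (by
      simp only [sub_mul, Finset.sum_sub_distrib, hvv, sub_self])
    simp only [sub_mul, Finset.sum_sub_distrib] at h0
    exact sub_eq_zero.mp h0
  have hψmem : ∀ x : ↥I, (∑ i, rep x i * ((Y i : ↥I) : PolyR K n)) ∈ I :=
    fun x => Ideal.sum_mem _ fun i _ => I.mul_mem_left _ (Y i).2
  set Ψ : ↥I →ₗ[PolyR K n] ↥I :=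
    { toFun := fun x => ⟨∑ i, rep x i * ((Y i : ↥I) : PolyR K n), hψmem x⟩
      map_add' := by
        intro x z
        apply Subtype.ext
        have h0 := hwd (rep (x + z)) (fun i => rep x i + rep z i) (by
          rw [hrep (x + z)]
          simp only [add_mul, Finset.sum_sub_distrib, Finset.sum_add_distrib, hrep x, hrep z]
          rfl)
        simp only [add_mul, Finset.sum_add_distrib] at h0
        exact h0
      map_smul' := by
        intro r x
        apply Subtype.ext
        have h0 := hwd (rep (r • x)) (fun i => r * rep x i) (by
          rw [hrep (r • x)]
          simp only [mul_assoc, ← Finset.mul_sum, hrep x]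
          rfl)
        simp only [mul_assoc, ← Finset.mul_sum] at h0
        simpa [smul_eq_mul] using h0 } with hΨ
  obtain ⟨c, hc⟩ := hbij.2 Ψ
  have hcx : ∀ x : ↥I, c * (x : PolyR K n) = ∑ i, rep x i * ((Y i : ↥I) : PolyR K n) := by
    intro x
    have h0 := LinearMap.ext_iff.mp hc x
    have h1 := Subtype.ext_iff.mp h0
    simpa [hΨ, smul_eq_mul] using h1
  have hkey : ∀ x : ↥I, f (I.toCotangent x) = I.toCotangent (c • x) := by
    intro x
    have h4 : x = ∑ i, rep x i • X i := Subtype.ext (by rw [hXcoe]; exact (hrep x).symm)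
    have h5 := hfS (rep x)
    rw [← h4] at h5
    rw [h5]
    congr 1
    apply Subtype.ext
    rw [hYcoe, ← hcx]
    simp [smul_eq_mul]
  have hwI2 : ∀ i, c * g i - ((Y i : ↥I) : PolyR K n) ∈ I ^ 2 := by
    intro i
    have h0 : I.toCotangent (c • X i) = I.toCotangent (Y i) := by
      rw [← hkey (X i)]
      exact hYf i
    have h1 := (Ideal.toCotangent_eq _).mp h0
    simpa [hX, smul_eq_mul] using h1
  set k : K := MvPolynomial.coeff 0 c with hk
  have hkg : ∀ i, (c - MvPolynomial.C k) * g i ∈ I ^ 2 := by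
    intro i
    have hgih : (g i).IsHomogeneous (n1 i) := StmtAux.isHomogeneous_of_isHomOfDeg (hg i)
    have hyih : (((Y i : ↥I) : PolyR K n)) ∈
        MvPolynomial.homogeneousSubmodule (Fin (n + 1)) K (n1 i) :=
      (MvPolynomial.mem_homogeneousSubmodule _ _).mpr
        (StmtAux.isHomogeneous_of_isHomOfDeg (hYdeg i))
    have h5 := hcomp2 _ (hwI2 i) (n1 i)
    rw [map_sub, StmtAux.homogeneousComponent_mul_homog c (g i) hgih,
        MvPolynomial.homogeneousComponent_of_mem hyih, if_pos rfl] at h5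
    have h6 := Ideal.sub_mem _ (hwI2 i) h5
    have h7 : (c * g i - ((Y i : ↥I) : PolyR K n)) -
        (MvPolynomial.C k * g i - ((Y i : ↥I) : PolyR K n)) = (c - MvPolynomial.C k) * g i := by
      ring
    rwa [h7] at h6
  have hfin : ∀ x ∈ I, (c - MvPolynomial.C k) * x ∈ I ^ 2 := by
    intro x hx
    rw [hspan, ← Ideal.submodule_span_eq] at hx
    refine Submodule.span_induction ?_ ?_ ?_ ?_ hx
    · rintro _ ⟨i, rfl⟩
      exact hkg i
    · simp
    · intro a b _ _ ha hb
      rw [mul_add]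
      exact Ideal.add_mem _ ha hb
    · intro r a _ ha
      rw [smul_eq_mul, show (c - MvPolynomial.C k) * (r * a) =
        r * ((c - MvPolynomial.C k) * a) from by ring]
      exact Ideal.mul_mem_left _ _ ha
  refine ⟨k, fun ξ => ?_⟩
  obtain ⟨x, rfl⟩ := Ideal.toCotangent_surjective I ξ
  rw [hkey x, show (algebraMap K (PolyR K n)) k = MvPolynomial.C k from by
    rw [MvPolynomial.algebraMap_eq], ← map_smul, ← sub_eq_zero, ← map_sub, ← sub_smul]
  refine (Ideal.toCotangent_eq_zero _ _).mpr ?_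
  have h9 := hfin (x : PolyR K n) x.2
  simpa [smul_eq_mul] using h9
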